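/- For every integer n ≥ 2, the left ideal Ac* decomposes as an internal direct sum of left ideals Ac* = A(c*)ⁿ ⊕ Ad*c* ⊕ Ad*(c*)² ⊕ ⋯ ⊕ Ad*(c*)^{n−1}. -/

import Mathlib

noncomputable section

/-- The relation `X * Y = 1` defining the Jacobson algebra. -/
def JacRel (K : Type) [Field K] : FreeAlgebra K (Fin 2) → FreeAlgebra K (Fin 2) → Prop :=
  fun a b => a = FreeAlgebra.ι K (0 : Fin 2) * FreeAlgebra.ι K (1 : Fin 2) ∧ b = 1

/-- The Jacobson algebra `K⟨X, Y ∣ XY = 1⟩`. -/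
abbrev Jac (K : Type) [Field K] := RingQuot (JacRel K)

variable (K : Type) [Field K]

/-- The generator `X`. -/
def Xg : Jac K := RingQuot.mkAlgHom K (JacRel K) (FreeAlgebra.ι K 0)
/-- The generator `Y`. -/
def Yg : Jac K := RingQuot.mkAlgHom K (JacRel K) (FreeAlgebra.ι K 1)

/-- `c* = YX²`. -/
def csE : Jac K := Yg K * Xg K ^ 2
/-- `d* = X - YX²`. -/
def dsE : Jac K := Xg K - Yg K * Xg K ^ 2

-- basic relation
lemma hXY : Xg K * Yg K = 1 := by
  have hrel : JacRel K (FreeAlgebra.ι K (0 : Fin 2) * FreeAlgebra.ι K (1 : Fin 2)) 1 :=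
    ⟨rfl, rfl⟩
  have := RingQuot.mkAlgHom_rel (S := K) hrel
  simpa [Xg, Yg, map_mul] using this

lemma hXYa (a : Jac K) : Xg K * (Yg K * a) = a := by
  rw [← mul_assoc, hXY, one_mul]

-- induction principle for Jac
lemma Jac.induction {P : Jac K → Prop} (halg : ∀ k : K, P (algebraMap K (Jac K) k))
    (hX : P (Xg K)) (hY : P (Yg K))
    (hadd : ∀ a b, P a → P b → P (a + b))
    (hmul : ∀ a b, P a → P b → P (a * b)) : ∀ a, P a := by
  intro a
  obtain ⟨b, rfl⟩ := RingQuot.mkAlgHom_surjective K (JacRel K) a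
  induction b using FreeAlgebra.induction with
  | grade0 r => rw [AlgHom.commutes]; exact halg r
  | grade1 i =>
      fin_cases i
      · exact hX
      · exact hY
  | add a b ha hb => rw [map_add]; exact hadd _ _ ha hb
  | mul a b ha hb => rw [map_mul]; exact hmul _ _ ha hb

-- The model module M
abbrev Rrow := ℕ →₀ K
abbrev Mmod := ℕ →₀ Rrow K

def sh : Rrow K →ₗ[K] Rrow K := Finsupp.lmapDomain K K Nat.succ
def yM : Mmod K →ₗ[K] Mmod K := Finsupp.lmapDomain (Rrow K) K Nat.succ
def xM : Mmod K →ₗ[K] Mmod K :=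
  Finsupp.lcomapDomain Nat.succ Nat.succ_injective +
    (Finsupp.lsingle 0 ∘ₗ (sh K) ∘ₗ Finsupp.lapply 0)

lemma sh_apply_zero (r : Rrow K) : sh K r 0 = 0 := by
  simp [sh, Finsupp.lmapDomain]
  exact Finsupp.mapDomain_notin_range _ _ (by simp [Set.range, Nat.succ_ne_zero])

lemma sh_apply_succ (r : Rrow K) (j : ℕ) : sh K r (j + 1) = r j := by
  simp [sh, Finsupp.lmapDomain]
  exact Finsupp.mapDomain_apply Nat.succ_injective _ _

lemma yM_apply_zero (f : Mmod K) : yM K f 0 = 0 := by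
  simp [yM, Finsupp.lmapDomain]
  exact Finsupp.mapDomain_notin_range _ _ (by simp [Set.range, Nat.succ_ne_zero])

lemma yM_apply_succ (f : Mmod K) (i : ℕ) : yM K f (i + 1) = f i := by
  simp [yM, Finsupp.lmapDomain]
  exact Finsupp.mapDomain_apply Nat.succ_injective _ _

lemma xM_apply (f : Mmod K) (i : ℕ) :
    xM K f i = f (i + 1) + (if i = 0 then sh K (f 0) else 0) := by
  rcases i with _ | i <;>
    simp [xM, Finsupp.lcomapDomain, Finsupp.comapDomain, Finsupp.single_apply]

lemma xM_apply_zero (f : Mmod K) : xM K f 0 = f 1 + sh K (f 0) := by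
  simp [xM_apply]

lemma xM_apply_succ (f : Mmod K) (i : ℕ) : xM K f (i + 1) = f (i + 2) := by
  simp [xM_apply]

lemma xy_eq_one : xM K * yM K = 1 := by
  refine LinearMap.ext fun f => Finsupp.ext fun i => ?_
  rcases i with _ | i
  · rw [Module.End.mul_apply, Module.End.one_apply, xM_apply_zero, yM_apply_zero,
      yM_apply_succ]
    simp
  · rw [Module.End.mul_apply, Module.End.one_apply, xM_apply_succ, yM_apply_succ]

-- the representation
def rho : Jac K →ₐ[K] Module.End K (Mmod K) :=
  RingQuot.liftAlgHom K ⟨FreeAlgebra.lift K ![xM K, yM K], by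
    rintro a b ⟨rfl, rfl⟩
    simp [map_mul, FreeAlgebra.lift_ι_apply]
    exact xy_eq_one K⟩

lemma rho_X : rho K (Xg K) = xM K := by
  simp [rho, Xg, RingQuot.liftAlgHom_mkAlgHom_apply, FreeAlgebra.lift_ι_apply]

lemma rho_Y : rho K (Yg K) = yM K := by
  simp [rho, Yg, RingQuot.liftAlgHom_mkAlgHom_apply, FreeAlgebra.lift_ι_apply]

-- basis elements
def eB (i j : ℕ) : Mmod K := Finsupp.single i (Finsupp.single j (1 : K))

lemma sh_single (j : ℕ) (c : K) : sh K (Finsupp.single j c) = Finsupp.single (j + 1) c := by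
  simp [sh, Finsupp.lmapDomain, Finsupp.mapDomain_single]

lemma yM_single (i : ℕ) (r : Rrow K) : yM K (Finsupp.single i r) = Finsupp.single (i + 1) r := by
  simp [yM, Finsupp.lmapDomain, Finsupp.mapDomain_single]

lemma xM_single_zero (r : Rrow K) : xM K (Finsupp.single 0 r) = Finsupp.single 0 (sh K r) := by
  refine Finsupp.ext fun i => ?_
  rcases i with _ | i
  · rw [xM_apply_zero]
    simp [Finsupp.single_apply]
  · rw [xM_apply_succ]
    simp [Finsupp.single_apply]

lemma xM_single_succ (i : ℕ) (r : Rrow K) :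
    xM K (Finsupp.single (i + 1) r) = Finsupp.single i r := by
  refine Finsupp.ext fun i' => ?_
  rcases i' with _ | i'
  · rw [xM_apply_zero]
    simp [Finsupp.single_apply, Nat.succ_ne_zero]
  · rw [xM_apply_succ]
    simp [Finsupp.single_apply]

-- the inverse map sigma
def sigmaRow : Rrow K →ₗ[K] Jac K :=
  Finsupp.lsum K fun j => LinearMap.toSpanSingleton K (Jac K) (Xg K ^ j)

def sigmaM : Mmod K →ₗ[K] Jac K :=
  Finsupp.lsum K fun i => (LinearMap.mulLeft K (Yg K ^ i)).comp (sigmaRow K)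

lemma sigmaRow_single (j : ℕ) (c : K) : sigmaRow K (Finsupp.single j c) = c • Xg K ^ j := by
  simp [sigmaRow, Finsupp.lsum_single, LinearMap.toSpanSingleton_apply]

lemma sigmaM_single (i : ℕ) (r : Rrow K) :
    sigmaM K (Finsupp.single i r) = Yg K ^ i * sigmaRow K r := by
  simp [sigmaM, Finsupp.lsum_single]

lemma sigmaRow_sh (r : Rrow K) : sigmaRow K (sh K r) = Xg K * sigmaRow K r := by
  have : (sigmaRow K).comp (sh K) = (LinearMap.mulLeft K (Xg K)).comp (sigmaRow K) := by
    refine Finsupp.lhom_ext fun j c => ?_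
    simp [sh_single, sigmaRow_single, pow_succ', Algebra.mul_smul_comm]
  exact LinearMap.congr_fun this r

lemma sigma_rho (a : Jac K) : ∀ f : Mmod K, sigmaM K (rho K a f) = a * sigmaM K f := by
  induction a using Jac.induction with
  | halg k =>
      intro f
      rw [AlgHom.commutes]
      rw [Module.algebraMap_end_apply, map_smul, Algebra.smul_def]
  | hX =>
      rw [rho_X]
      intro f
      have : (sigmaM K).comp (xM K) = (LinearMap.mulLeft K (Xg K)).comp (sigmaM K) := by
        refine Finsupp.lhom_ext fun i r => ?_
        rcases i with _ | i
        · simp [xM_single_zero, sigmaM_single, sigmaRow_sh]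
        · simp only [LinearMap.coe_comp, Function.comp_apply, LinearMap.mulLeft_apply,
            xM_single_succ, sigmaM_single]
          rw [pow_succ', mul_assoc, hXYa]
      exact LinearMap.congr_fun this f
  | hY =>
      rw [rho_Y]
      intro f
      have : (sigmaM K).comp (yM K) = (LinearMap.mulLeft K (Yg K)).comp (sigmaM K) := by
        refine Finsupp.lhom_ext fun i r => ?_
        simp only [LinearMap.coe_comp, Function.comp_apply, LinearMap.mulLeft_apply,
          yM_single, sigmaM_single]
        rw [pow_succ', mul_assoc]
      exact LinearMap.congr_fun this f
  | hadd a b ha hb =>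
      intro f
      rw [map_add, LinearMap.add_apply, map_add, ha, hb, add_mul]
  | hmul a b ha hb =>
      intro f
      rw [map_mul, Module.End.mul_apply, ha, hb, ← mul_assoc]

lemma sigma_e00 : sigmaM K (eB K 0 0) = 1 := by
  simp [eB, sigmaM_single, sigmaRow_single]

lemma pi_injective {a b : Jac K} (h : rho K a (eB K 0 0) = rho K b (eB K 0 0)) : a = b := by
  have := congrArg (sigmaM K) h
  rwa [sigma_rho, sigma_rho, sigma_e00, mul_one, mul_one] at this

-- predicates
def P0M (n : ℕ) (f : Mmod K) : Prop := ∀ i j, j ≤ n → f i j = 0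

def PkM (k : ℕ) (f : Mmod K) : Prop :=
  (∀ i j, j ≠ k + 1 → j ≠ k + 2 → f i j = 0) ∧ f 0 (k + 2) = 0 ∧
    ∀ i, f (i + 1) (k + 2) = - f i (k + 1)

-- generic invariance under the representation
lemma rho_invariant (P : Mmod K → Prop)
    (hsmul : ∀ (c : K) f, P f → P (c • f))
    (hadd : ∀ f g, P f → P g → P (f + g))
    (hx : ∀ f, P f → P (xM K f)) (hy : ∀ f, P f → P (yM K f)) :
    ∀ a f, P f → P (rho K a f) := by
  intro a
  induction a using Jac.induction with
  | halg c =>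
      intro f hf
      rw [AlgHom.commutes, Module.algebraMap_end_apply]
      exact hsmul c f hf
  | hX => intro f hf; rw [rho_X]; exact hx f hf
  | hY => intro f hf; rw [rho_Y]; exact hy f hf
  | hadd a b ha hb =>
      intro f hf
      rw [map_add, LinearMap.add_apply]
      exact hadd _ _ (ha f hf) (hb f hf)
  | hmul a b ha hb =>
      intro f hf
      rw [map_mul, Module.End.mul_apply]
      exact ha _ (hb f hf)

lemma P0M_invariant (n : ℕ) : ∀ a f, P0M K n f → P0M K n (rho K a f) := by
  refine rho_invariant K _ ?_ ?_ ?_ ?_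
  · intro c f hf i j hj
    rw [Finsupp.smul_apply, Finsupp.smul_apply, hf i j hj, smul_zero]
  · intro f g hf hg i j hj
    rw [Finsupp.add_apply, Finsupp.add_apply, hf i j hj, hg i j hj, add_zero]
  · intro f hf i j hj
    rcases i with _ | i
    · rw [xM_apply_zero, Finsupp.add_apply, hf 1 j hj, zero_add]
      rcases j with _ | j
      · exact sh_apply_zero K _
      · rw [sh_apply_succ]
        exact hf 0 j (by omega)
    · rw [xM_apply_succ]
      exact hf (i + 2) j hj
  · intro f hf i j hj
    rcases i with _ | i
    · rw [yM_apply_zero]; rfl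
    · rw [yM_apply_succ]; exact hf i j hj

lemma PkM_invariant (k : ℕ) : ∀ a f, PkM K k f → PkM K k (rho K a f) := by
  refine rho_invariant K _ ?_ ?_ ?_ ?_
  · rintro c f ⟨h1, h2, h3⟩
    refine ⟨fun i j hj1 hj2 => ?_, ?_, fun i => ?_⟩
    · rw [Finsupp.smul_apply, Finsupp.smul_apply, h1 i j hj1 hj2, smul_zero]
    · rw [Finsupp.smul_apply, Finsupp.smul_apply, h2, smul_zero]
    · rw [Finsupp.smul_apply, Finsupp.smul_apply, Finsupp.smul_apply, Finsupp.smul_apply,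
        h3 i, smul_neg]
  · rintro f g ⟨hf1, hf2, hf3⟩ ⟨hg1, hg2, hg3⟩
    refine ⟨fun i j hj1 hj2 => ?_, ?_, fun i => ?_⟩
    · rw [Finsupp.add_apply, Finsupp.add_apply, hf1 i j hj1 hj2, hg1 i j hj1 hj2, add_zero]
    · rw [Finsupp.add_apply, Finsupp.add_apply, hf2, hg2, add_zero]
    · rw [Finsupp.add_apply, Finsupp.add_apply, Finsupp.add_apply, Finsupp.add_apply,
        hf3 i, hg3 i, neg_add]
  · rintro f ⟨h1, h2, h3⟩
    refine ⟨fun i j hj1 hj2 => ?_, ?_, fun i => ?_⟩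
    · rcases i with _ | i
      · rw [xM_apply_zero, Finsupp.add_apply, h1 1 j hj1 hj2, zero_add]
        rcases j with _ | j
        · exact sh_apply_zero K _
        · rw [sh_apply_succ]
          rcases Decidable.eq_or_ne j (k + 2) with rfl | hj
          · exact h2
          · exact h1 0 j (by omega) hj
      · rw [xM_apply_succ]
        exact h1 (i + 2) j hj1 hj2
    · rw [xM_apply_zero, Finsupp.add_apply, h3 0, sh_apply_succ, neg_add_cancel]
    · rcases i with _ | i
      · rw [xM_apply_succ, xM_apply_zero, Finsupp.add_apply, h3 1, sh_apply_succ,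
          h1 0 k (by omega) (by omega), add_zero]
      · rw [xM_apply_succ, xM_apply_succ]
        exact h3 (i + 2)
  · rintro f ⟨h1, h2, h3⟩
    refine ⟨fun i j hj1 hj2 => ?_, ?_, fun i => ?_⟩
    · rcases i with _ | i
      · rw [yM_apply_zero]; rfl
      · rw [yM_apply_succ]; exact h1 i j hj1 hj2
    · rw [yM_apply_zero]; rfl
    · rcases i with _ | i
      · rw [yM_apply_succ, yM_apply_zero, h2]; simp
      · rw [yM_apply_succ, yM_apply_succ, h3 i]

-- computation of rho on basis vectors
lemma eB_apply (i j i' j' : ℕ) : eB K i j i' j' = if i = i' ∧ j = j' then (1 : K) else 0 := by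
  rcases eq_or_ne i i' with rfl | h
  · rw [eB, Finsupp.single_eq_same, Finsupp.single_apply]
    by_cases hj : j = j' <;> simp [hj]
  · rw [eB, Finsupp.single_eq_of_ne' h, if_neg (by tauto)]
    rfl

lemma rho_cs_e1 (j : ℕ) : rho K (csE K) (eB K 1 j) = eB K 1 (j + 1) := by
  have : rho K (csE K) = yM K * (xM K * xM K) := by
    rw [csE, map_mul, map_pow, rho_X, rho_Y, sq]
  rw [this]
  simp only [Module.End.mul_apply, eB]
  rw [show (1 : ℕ) = 0 + 1 from rfl, xM_single_succ, xM_single_zero, sh_single, yM_single]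

lemma rho_cs_e00 : rho K (csE K) (eB K 0 0) = eB K 1 2 := by
  have : rho K (csE K) = yM K * (xM K * xM K) := by
    rw [csE, map_mul, map_pow, rho_X, rho_Y, sq]
  rw [this]
  simp only [Module.End.mul_apply, eB]
  rw [xM_single_zero, sh_single, xM_single_zero, sh_single, yM_single]

lemma rho_cs_pow_e1 (m j : ℕ) : rho K (csE K ^ m) (eB K 1 j) = eB K 1 (j + m) := by
  induction m with
  | zero => simp
  | succ m ih =>
      rw [pow_succ', map_mul, Module.End.mul_apply, ih, rho_cs_e1]
      rfl

lemma pi_g0 (m : ℕ) : rho K (csE K ^ (m + 1)) (eB K 0 0) = eB K 1 (m + 2) := by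
  rw [pow_succ, map_mul, Module.End.mul_apply, rho_cs_e00, rho_cs_pow_e1]
  rw [show 2 + m = m + 2 from by omega]

lemma pi_gk (m : ℕ) :
    rho K (dsE K * csE K ^ (m + 1)) (eB K 0 0) = eB K 0 (m + 2) - eB K 1 (m + 3) := by
  rw [map_mul, Module.End.mul_apply, pi_g0]
  have hsplit : dsE K + Yg K * Xg K ^ 2 = Xg K := sub_add_cancel _ _
  have h2 : rho K (dsE K) (eB K 1 (m + 2)) + rho K (Yg K * Xg K ^ 2) (eB K 1 (m + 2)) =
      rho K (Xg K) (eB K 1 (m + 2)) := by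
    rw [← LinearMap.add_apply, ← map_add, hsplit]
  have h3 : rho K (dsE K) (eB K 1 (m + 2)) =
      rho K (Xg K) (eB K 1 (m + 2)) - rho K (Yg K * Xg K ^ 2) (eB K 1 (m + 2)) :=
    by rw [← h2]; exact (add_sub_cancel_right (_ : Mmod K) _).symm
  rw [h3, map_mul, map_pow, rho_X, rho_Y, Module.End.mul_apply, sq, Module.End.mul_apply]
  simp only [eB]
  rw [show (1 : ℕ) = 0 + 1 from rfl, xM_single_succ, xM_single_zero, sh_single, yM_single]

-- predicate checks on the generators' images
lemma P0M_pi_g0 (n : ℕ) (hn : 2 ≤ n) : P0M K n (eB K 1 (n + 1)) := by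
  intro i j hj
  rw [eB_apply, if_neg (by omega)]

lemma PkM_pi_gk (k : ℕ) : PkM K k (eB K 0 (k + 1) - eB K 1 (k + 2)) := by
  refine ⟨fun i j hj1 hj2 => ?_, ?_, fun i => ?_⟩ <;>
    simp only [Finsupp.sub_apply, eB_apply] <;>
    split_ifs <;>
      first
        | omega
        | (exfalso; omega)
        | (norm_num; done)
        | (simp only [true_and, and_true, false_and, and_false, not_true,
            not_false_iff] at *; omega)
        | simp_all
        | tauto

-- the key combinatorial lemma in the model
lemma keyM (n : ℕ) (hn : 2 ≤ n) (m : Fin n → Mmod K)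
    (h0 : ∀ k : Fin n, (k : ℕ) = 0 → P0M K n (m k))
    (hk : ∀ k : Fin n, (k : ℕ) ≠ 0 → PkM K ((k : ℕ)) (m k))
    (hsum : ∑ k, m k = 0) : ∀ k, m k = 0 := by
  have hpt : ∀ i j, (∑ k, (m k) i j) = 0 := by
    intro i j
    have e1 : (∑ k, m k) i = ∑ k, (m k) i := Finsupp.finset_sum_apply _ _ _
    have e2 : (∑ k, (m k) i) j = ∑ k, (m k) i j := Finsupp.finset_sum_apply _ _ _
    rw [← e2, ← e1, hsum]
    rfl
  have claim : ∀ k : ℕ, k ≠ 0 → ∀ hk2 : k < n, ∀ i, (m ⟨k, hk2⟩) i (k + 1) = 0 := by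
    intro k
    induction k using Nat.strong_induction_on with
    | _ k IH =>
      intro hk1 hk2 i
      have hs := hpt i (k + 1)
      have hsingle : ∑ j, (m j) i (k + 1) = (m ⟨k, hk2⟩) i (k + 1) := by
        refine Fintype.sum_eq_single _ fun j hj => ?_
        by_cases hj0 : (j : ℕ) = 0
        · exact h0 j hj0 i (k + 1) (by omega)
        · obtain ⟨c1, c2, c3⟩ := hk j hj0
          by_cases hcase : (j : ℕ) + 1 = k
          · rw [show k + 1 = (j : ℕ) + 2 from by omega]
            rcases i with _ | i'
            · exact c2
            · rw [c3 i']
              have hIH := IH (j : ℕ) (by omega) hj0 j.isLt i'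
              rw [Fin.eta] at hIH
              rw [hIH, neg_zero]
          · have hne : (j : ℕ) ≠ k := fun h => hj (Fin.ext h)
            exact c1 i (k + 1) (by omega) (by omega)
      rw [hsingle] at hs
      exact hs
  have hz : ∀ k : Fin n, (k : ℕ) ≠ 0 → m k = 0 := by
    intro k hk0
    obtain ⟨c1, c2, c3⟩ := hk k hk0
    have hcol : ∀ i, (m k) i ((k : ℕ) + 1) = 0 := by
      intro i
      have := claim (k : ℕ) hk0 k.isLt i
      rwa [Fin.eta] at this
    refine Finsupp.ext fun i => Finsupp.ext fun j => ?_
    simp only [Finsupp.coe_zero, Pi.zero_apply, Finsupp.zero_apply]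
    by_cases hj1 : j = (k : ℕ) + 1
    · rw [hj1]; exact hcol i
    · by_cases hj2 : j = (k : ℕ) + 2
      · rw [hj2]
        rcases i with _ | i'
        · exact c2
        · rw [c3 i', hcol i', neg_zero]
      · exact c1 i j hj1 hj2
  intro k
  by_cases hk0 : (k : ℕ) = 0
  · have hsingle : ∑ j, m j = m k := by
      refine Fintype.sum_eq_single _ fun j hj => ?_
      refine hz j fun hj0 => hj (Fin.ext ?_)
      rw [hj0, hk0]
    rw [hsingle] at hsum
    exact hsum
  · exact hz k hk0

-- the algebraic identity used for the span computation
lemma idA (w : Jac K) :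
    (Yg K * (Yg K * Xg K)) * (csE K * (csE K * w)) +
      (Yg K - Yg K * (Yg K * Xg K)) * (dsE K * (csE K * w)) = csE K * w := by
  simp only [csE, dsE, sq, mul_sub, sub_mul, mul_assoc, hXYa]
  abel

/-- For `n ≥ 2`, the family of left ideals `A(c*)ⁿ, Ad*c*, Ad*(c*)², …, Ad*(c*)^{n-1}`
(indexed over `Fin n`, the `0`-th member being `A(c*)ⁿ`). -/
def decompFam (n : ℕ) : Fin n → Submodule (Jac K) (Jac K) := fun i =>
  if (i : ℕ) = 0 then Submodule.span (Jac K) {csE K ^ n}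
  else Submodule.span (Jac K) {dsE K * csE K ^ (i : ℕ)}

-- the uniform family of generators
def genF (n : ℕ) : Fin n → Jac K := fun i =>
  if (i : ℕ) = 0 then csE K ^ n else dsE K * csE K ^ (i : ℕ)

lemma decompFam_eq (n : ℕ) (i : Fin n) :
    decompFam K n i = Submodule.span (Jac K) {genF K n i} := by
  by_cases h : (i : ℕ) = 0 <;> simp [decompFam, genF, h]

lemma sup_eq (n : ℕ) (hn : 2 ≤ n) :
    (⨆ i : Fin n, decompFam K n i) = Submodule.span (Jac K) {csE K} := by
  apply le_antisymm
  · refine iSup_le fun i => ?_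
    rw [decompFam_eq, Submodule.span_le, Set.singleton_subset_iff, SetLike.mem_coe,
      Submodule.mem_span_singleton]
    by_cases h : (i : ℕ) = 0
    · refine ⟨csE K ^ (n - 1), ?_⟩
      simp only [genF, if_pos h]
      rw [smul_eq_mul, ← pow_succ, show n - 1 + 1 = n from by omega]
    · refine ⟨dsE K * csE K ^ ((i : ℕ) - 1), ?_⟩
      simp only [genF, if_neg h]
      rw [smul_eq_mul, mul_assoc, ← pow_succ,
        show (i : ℕ) - 1 + 1 = (i : ℕ) from by omega]
  · rw [Submodule.span_le, Set.singleton_subset_iff, SetLike.mem_coe]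
    have main : ∀ d t, 1 ≤ t → t ≤ n → n - t = d → csE K ^ t ∈ ⨆ i, decompFam K n i := by
      intro d
      induction d with
      | zero =>
          intro t h1 h2 h3
          have ht : t = n := by omega
          subst ht
          refine Submodule.mem_iSup_of_mem ⟨0, by omega⟩ ?_
          rw [decompFam_eq]
          have hg : genF K t ⟨0, by omega⟩ = csE K ^ t := by simp [genF]
          rw [hg]
          exact Submodule.mem_span_singleton_self _
      | succ d ihd =>
          intro t h1 h2 h3
          rcases t with _ | s
          · omega
          have hid := idA K (csE K ^ s)
          rw [← pow_succ', ← pow_succ'] at hid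
          rw [← hid]
          refine Submodule.add_mem _ ?_ ?_
          · have hmem := ihd (s + 2) (by omega) (by omega) (by omega)
            have := Submodule.smul_mem (⨆ i, decompFam K n i) (Yg K * (Yg K * Xg K)) hmem
            rwa [smul_eq_mul] at this
          · have hlt : s + 1 < n := by omega
            have hmem : dsE K * csE K ^ (s + 1) ∈ decompFam K n ⟨s + 1, hlt⟩ := by
              rw [decompFam_eq]
              have hg : genF K n ⟨s + 1, hlt⟩ = dsE K * csE K ^ (s + 1) := by simp [genF]
              rw [hg]
              exact Submodule.mem_span_singleton_self _
            have := Submodule.smul_mem (⨆ i, decompFam K n i) (Yg K - Yg K * (Yg K * Xg K))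
              (Submodule.mem_iSup_of_mem _ hmem)
            rwa [smul_eq_mul] at this
    have := main (n - 1) 1 le_rfl (by omega) (by omega)
    rwa [pow_one] at this

lemma indep (n : ℕ) (hn : 2 ≤ n) : iSupIndep (decompFam K n) := by
  rw [iSupIndep_def]
  intro k
  rw [Submodule.disjoint_def]
  intro x hxk hxrest
  rw [decompFam_eq, Submodule.mem_span_singleton] at hxk
  obtain ⟨a, ha⟩ := hxk
  have hsub : (⨆ j, ⨆ (_ : j ≠ k), decompFam K n j) ≤
      Submodule.span (Jac K) (Set.range fun j => if j = k then 0 else genF K n j) := by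
    refine iSup_le fun j => iSup_le fun hj => ?_
    rw [decompFam_eq, Submodule.span_le, Set.singleton_subset_iff]
    exact Submodule.subset_span ⟨j, by simp [if_neg hj]⟩
  have hx2 := hsub hxrest
  rw [Submodule.mem_span_range_iff_exists_fun] at hx2
  obtain ⟨c, hc⟩ := hx2
  set b : Fin n → Jac K := fun j => if j = k then a else -(c j) with hb
  have hsum0 : ∑ j, b j * genF K n j = 0 := by
    have hterm : ∀ j : Fin n, b j * genF K n j =
        (if j = k then a • genF K n k else 0) -
          c j • (if j = k then 0 else genF K n j) := by
      intro j
      by_cases h : j = k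
      · subst h; simp [hb, smul_eq_mul]
      · simp only [hb, if_neg h, smul_eq_mul, zero_sub]
        exact neg_mul (c j) (genF K n j)
    rw [Finset.sum_congr rfl fun j _ => hterm j, Finset.sum_sub_distrib,
      Finset.sum_ite_eq' Finset.univ k, if_pos (Finset.mem_univ k), hc, ha, sub_self]
  have hgen0 : ∀ j : Fin n, (j : ℕ) = 0 →
      rho K (genF K n j) (eB K 0 0) = eB K 1 (n + 1) := by
    intro j hj
    have hg : genF K n j = csE K ^ n := by simp [genF, hj]
    rw [hg]
    have := pi_g0 K (n - 1)
    rwa [show n - 1 + 1 = n from by omega, show n - 1 + 2 = n + 1 from by omega] at this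
  have hgenk : ∀ j : Fin n, (j : ℕ) ≠ 0 → rho K (genF K n j) (eB K 0 0) =
      eB K 0 ((j : ℕ) + 1) - eB K 1 ((j : ℕ) + 2) := by
    intro j hj
    have hg : genF K n j = dsE K * csE K ^ (j : ℕ) := by simp [genF, hj]
    rw [hg]
    have := pi_gk K ((j : ℕ) - 1)
    rwa [show (j : ℕ) - 1 + 1 = (j : ℕ) from by omega,
      show (j : ℕ) - 1 + 2 = (j : ℕ) + 1 from by omega,
      show (j : ℕ) - 1 + 3 = (j : ℕ) + 2 from by omega] at this
  set mfam : Fin n → Mmod K := fun j => rho K (b j * genF K n j) (eB K 0 0) with hm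
  have hms : ∑ j, mfam j = 0 := by
    calc ∑ j, mfam j = (∑ j, rho K (b j * genF K n j)) (eB K 0 0) := by
          rw [LinearMap.sum_apply]
    _ = rho K (∑ j, b j * genF K n j) (eB K 0 0) := by rw [map_sum]
    _ = 0 := by rw [hsum0, map_zero, LinearMap.zero_apply]
  have hkey := keyM K n hn mfam
    (fun j hj => by
      rw [hm]
      simp only [map_mul, Module.End.mul_apply]
      rw [hgen0 j hj]
      exact P0M_invariant K n (b j) _ (P0M_pi_g0 K n hn))
    (fun j hj => by
      rw [hm]
      simp only [map_mul, Module.End.mul_apply]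
      rw [hgenk j hj]
      exact PkM_invariant K (j : ℕ) (b j) _ (PkM_pi_gk K (j : ℕ)))
    hms k
  have hzero : rho K (b k * genF K n k) (eB K 0 0) = rho K 0 (eB K 0 0) := by
    rw [map_zero, LinearMap.zero_apply]
    exact hkey
  have hbk := pi_injective K hzero
  have hbk' : a * genF K n k = 0 := by
    have : b k = a := by rw [hb]; simp
    rwa [this] at hbk
  rw [← ha, smul_eq_mul, hbk']

/-- For every `n ≥ 2`, the left ideal `Ac*` is the internal direct sum
`A(c*)ⁿ ⊕ Ad*c* ⊕ Ad*(c*)² ⊕ ⋯ ⊕ Ad*(c*)^{n-1}`. -/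
theorem stmt6 (n : ℕ) (hn : 2 ≤ n) :
    (⨆ i : Fin n, decompFam K n i) = Submodule.span (Jac K) {csE K} ∧
    iSupIndep (decompFam K n) :=
  ⟨sup_eq K n hn, indep K n hn⟩
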